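/- Let n be a positive integer divisible by 2 with n ≥ 8. For every set Ω ⊆ {1,…,n}×{1,…,n} with |Ω| ≤ n²/4, there exist two distinct rank-2 matrices M₁ ≠ M₂ ∈ ℝ^{n×n}, each of whose thin SVD factors U, V ∈ ℝ^{n×2} (with orthonormal columns) satisfy the incoherence bounds ‖U^i‖² ≤ 3/n and ‖V^j‖² ≤ 3/n for all rows i, j, such that P_Ω(M₁) = P_Ω(M₂). In particular, no recovery procedure can exactly recover every rank-2 matrix satisfying the standard incoherence assumption A1 (with μ₀ ≤ 3/2) from the observations P_Ω(M). -/

import Mathlib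

open Matrix
open scoped BigOperators

noncomputable section

/-- Euclidean norm of a vector. -/
def vecNorm {β : Type*} [Fintype β] (x : β → ℝ) : ℝ :=
  Real.sqrt (∑ i, x i ^ 2)

/-- Spectral norm (largest singular value) of a real matrix. -/
def specNorm {α β : Type*} [Fintype α] [Fintype β] (A : Matrix α β ℝ) : ℝ :=
  sSup {c | ∃ x : β → ℝ, vecNorm x ≤ 1 ∧ c = vecNorm (A.mulVec x)}

/-- Second largest singular value of a real matrix (Courant–Fischer characterization). -/
def sigma2 {α β : Type*} [Fintype α] [Fintype β] (A : Matrix α β ℝ) : ℝ :=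
  ⨅ v : β → ℝ, sSup {c | ∃ x : β → ℝ,
    vecNorm x ≤ 1 ∧ (∑ i, v i * x i) = 0 ∧ c = vecNorm (A.mulVec x)}

/-- Frobenius norm. -/
def frobNorm {α β : Type*} [Fintype α] [Fintype β] (A : Matrix α β ℝ) : ℝ :=
  Real.sqrt (∑ i, ∑ j, A i j ^ 2)

/-- Nuclear norm: the sum of the singular values, i.e. the trace of `√(AᵀA)`. -/
def nuclearNorm {α β : Type*} [Fintype α] [Fintype β] [DecidableEq β]
    (A : Matrix α β ℝ) : ℝ :=
  (let hA := Matrix.posSemidef_conjTranspose_mul_self A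
   (hA.1.eigenvectorUnitary : Matrix β β ℝ) *
     Matrix.diagonal (RCLike.ofReal ∘ Real.sqrt ∘ hA.1.eigenvalues) *
     (star hA.1.eigenvectorUnitary : Matrix β β ℝ)).trace

/-- The sampling operator `P_Ω`. -/
def sampl {n : ℕ} (Ω : Finset (Fin n × Fin n)) (M : Matrix (Fin n) (Fin n) ℝ) :
    Matrix (Fin n) (Fin n) ℝ :=
  Matrix.of fun i j => if (i, j) ∈ Ω then M i j else 0

/-- The biadjacency matrix `G` of the bipartite graph with edge set `Ω`. -/
def biadj {n : ℕ} (Ω : Finset (Fin n × Fin n)) : Matrix (Fin n) (Fin n) ℝ :=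
  Matrix.of fun i j => if (i, j) ∈ Ω then (1 : ℝ) else 0

/-- `Ω` is the edge set of a `d`-regular bipartite graph: every row and every column
of `G` has exactly `d` ones. -/
def RegularSampling {n : ℕ} (Ω : Finset (Fin n × Fin n)) (d : ℕ) : Prop :=
  (∀ i : Fin n, (Finset.univ.filter fun j => (i, j) ∈ Ω).card = d) ∧
  (∀ j : Fin n, (Finset.univ.filter fun i => (i, j) ∈ Ω).card = d)

/-- Assumption G1: the all-ones vector is a top left- and right-singular vector of `G`,
with `σ₁(G) = d`. -/
def AssumptionG1 {n : ℕ} (Ω : Finset (Fin n × Fin n)) (d : ℕ) : Prop :=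
  specNorm (biadj Ω) = d ∧
  (biadj Ω).mulVec (fun _ => 1) = (fun _ => (d : ℝ)) ∧
  Matrix.vecMul (fun _ => 1) (biadj Ω) = (fun _ => (d : ℝ))

/-- Assumption G2: `σ₂(G) ≤ C·√d`. -/
def AssumptionG2 {n : ℕ} (Ω : Finset (Fin n × Fin n)) (d : ℕ) (C : ℝ) : Prop :=
  sigma2 (biadj Ω) ≤ C * Real.sqrt d

/-- Assumption A1 (`μ₀`-incoherence) for one factor: every row `U^i` satisfies
`‖U^i‖² ≤ μ₀ r / n`. -/
def IncoherentRows {n r : ℕ} (U : Matrix (Fin n) (Fin r) ℝ) (μ₀ : ℝ) : Prop :=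
  ∀ i : Fin n, (∑ k, U i k ^ 2) ≤ μ₀ * r / n

/-- Assumption A2 (strong incoherence with parameter `δ`) for one factor:
for every `S` with `|S| = d`, `‖(n/d)·∑_{k∈S} U^k (U^k)ᵀ − I‖ ≤ δ`. -/
def StrongIncoherence {n r : ℕ} (U : Matrix (Fin n) (Fin r) ℝ) (d : ℕ) (δ : ℝ) : Prop :=
  ∀ S : Finset (Fin n), S.card = d →
    specNorm (((n : ℝ) / (d : ℝ)) • (∑ k ∈ S, Matrix.vecMulVec (U k) (U k)) - 1) ≤ δ

/-- `M = U · diagonal s · Vᵀ` is a thin SVD of the rank-`r` matrix `M`. -/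
def IsThinSVD {n r : ℕ} (M : Matrix (Fin n) (Fin n) ℝ)
    (U : Matrix (Fin n) (Fin r) ℝ) (s : Fin r → ℝ) (V : Matrix (Fin n) (Fin r) ℝ) : Prop :=
  Uᵀ * U = 1 ∧ Vᵀ * V = 1 ∧ (∀ i, 0 < s i) ∧ M = U * Matrix.diagonal s * Vᵀ

/-- The projection `P_T` onto the subspace `T` spanned by matrices `UXᵀ` and `YVᵀ`. -/
def projT {n r : ℕ} (U V : Matrix (Fin n) (Fin r) ℝ) (Z : Matrix (Fin n) (Fin n) ℝ) :
    Matrix (Fin n) (Fin n) ℝ :=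
  U * Uᵀ * Z + Z * (V * Vᵀ) - U * Uᵀ * Z * (V * Vᵀ)

/-- The projection `P_{T⊥}` onto the orthogonal complement of `T`. -/
def projTperp {n r : ℕ} (U V : Matrix (Fin n) (Fin r) ℝ) (Z : Matrix (Fin n) (Fin n) ℝ) :
    Matrix (Fin n) (Fin n) ℝ :=
  (1 - U * Uᵀ) * Z * (1 - V * Vᵀ)

end

/-- `M` is a rank-2 matrix with a thin SVD whose factors satisfy the incoherence
bounds `‖U^i‖² ≤ 3/n` and `‖V^j‖² ≤ 3/n`. -/
def IncoherentRank2 {n : ℕ} (M : Matrix (Fin n) (Fin n) ℝ) : Prop :=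
  M.rank = 2 ∧
  ∃ (U V : Matrix (Fin n) (Fin 2) ℝ) (s : Fin 2 → ℝ),
    Uᵀ * U = 1 ∧ Vᵀ * V = 1 ∧ (∀ i, 0 < s i) ∧
    M = U * Matrix.diagonal s * Vᵀ ∧
    (∀ i : Fin n, (∑ k, U i k ^ 2) ≤ 3 / n) ∧
    (∀ j : Fin n, (∑ k, V j k ^ 2) ≤ 3 / n)


section Aux

open Finset

lemma aux_sum_ite {n : ℕ} (T : Finset (Fin n)) (x y u v : ℝ) :
    ∑ i, (if i ∈ T then x else y) * (if i ∈ T then u else v)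
      = T.card * (x * u) + Tᶜ.card * (y * v) := by
  have h : ∀ i ∈ Finset.univ, (if i ∈ T then x else y) * (if i ∈ T then u else v)
      = if i ∈ T then x * u else y * v := fun i _ => by split <;> ring
  rw [Finset.sum_congr rfl h, Finset.sum_ite, Finset.sum_const, Finset.sum_const]
  have h1 : Finset.univ.filter (fun i => i ∈ T) = T := by ext i; simp
  have h2 : Finset.univ.filter (fun i => i ∉ T) = Tᶜ := by ext i; simp
  rw [h1, h2, nsmul_eq_mul, nsmul_eq_mul]

lemma aux_rank {n : ℕ} (U V : Matrix (Fin n) (Fin 2) ℝ)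
    (hU : Uᵀ * U = 1) (hV : Vᵀ * V = 1) : (U * Vᵀ).rank = 2 := by
  refine le_antisymm ?_ ?_
  · calc (U * Vᵀ).rank ≤ U.rank := Matrix.rank_mul_le_left U Vᵀ
      _ ≤ Fintype.card (Fin 2) := Matrix.rank_le_card_width U
      _ = 2 := by simp
  · have h1 : Uᵀ * ((U * Vᵀ) * V) = 1 := by
      rw [Matrix.mul_assoc, hV, Matrix.mul_one, hU]
    calc (2:ℕ) = (1 : Matrix (Fin 2) (Fin 2) ℝ).rank := by
          rw [Matrix.rank_one]; simp
      _ = (Uᵀ * ((U * Vᵀ) * V)).rank := by rw [h1]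
      _ ≤ ((U * Vᵀ) * V).rank := Matrix.rank_mul_le_right _ _
      _ ≤ (U * Vᵀ).rank := Matrix.rank_mul_le_left _ _

end Aux

set_option maxHeartbeats 2000000 in
/-- with at most `n²/4` samples, two distinct incoherent rank-2 matrices
agree on all observed entries, so universal exact recovery is impossible (Claim 2). -/
theorem stmt_6 {n : ℕ} (hn2 : 2 ∣ n) (hn : 8 ≤ n)
    (Ω : Finset (Fin n × Fin n)) (hΩ : (Ω.card : ℝ) ≤ (n : ℝ) ^ 2 / 4) :
    ∃ M₁ M₂ : Matrix (Fin n) (Fin n) ℝ,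
      M₁ ≠ M₂ ∧ IncoherentRank2 M₁ ∧ IncoherentRank2 M₂ ∧
      sampl Ω M₁ = sampl Ω M₂ := by
  classical
  obtain ⟨m, hm⟩ := hn2
  have hm4 : 4 ≤ m := by omega
  -- pigeonhole: a column with at most m sampled entries
  obtain ⟨j₀, hj₀⟩ : ∃ j₀ : Fin n, (Finset.univ.filter fun i => (i, j₀) ∈ Ω).card ≤ m := by
    by_contra hcon
    push_neg at hcon
    have hfib : ∀ j : Fin n, (Ω.filter fun p => p.2 = j).card
        = (Finset.univ.filter fun i => (i, j) ∈ Ω).card := by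
      intro j
      apply Finset.card_bij (fun p _ => p.1)
      · intro p hp
        simp only [Finset.mem_filter] at hp ⊢
        refine ⟨Finset.mem_univ _, ?_⟩
        have : ((p.1, j) : Fin n × Fin n) = p := by
          rw [← hp.2]
        rw [this]; exact hp.1
      · intro p hp q hq hpq
        simp only [Finset.mem_filter] at hp hq
        exact Prod.ext hpq (hp.2.trans hq.2.symm)
      · intro i hi
        simp only [Finset.mem_filter] at hi
        exact ⟨(i, j), Finset.mem_filter.mpr ⟨hi.2, rfl⟩, rfl⟩
    have hsum : Ω.card = ∑ j : Fin n, (Finset.univ.filter fun i => (i, j) ∈ Ω).card := by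
      rw [Finset.card_eq_sum_card_fiberwise (f := Prod.snd) (t := Finset.univ)
        (fun p _ => Finset.mem_univ _)]
      exact Finset.sum_congr rfl fun j _ => hfib j
    have hge : n * (m + 1) ≤ Ω.card := by
      rw [hsum]
      calc n * (m + 1) = ∑ _j : Fin n, (m + 1) := by
            simp [Finset.sum_const, Finset.card_univ, mul_comm]
        _ ≤ _ := Finset.sum_le_sum fun j _ => hcon j
    have hcast : ((n * (m + 1) : ℕ) : ℝ) ≤ (n : ℝ) ^ 2 / 4 :=
      le_trans (by exact_mod_cast hge) hΩ
    rw [hm] at hcast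
    push_cast at hcast
    have h2 : (2 * (m:ℝ)) ^ 2 / 4 = (m:ℝ) ^ 2 := by ring
    rw [h2] at hcast
    have h4 : (4:ℝ) ≤ (m:ℝ) := by exact_mod_cast hm4
    have hexp : 2 * (m:ℝ) * ((m:ℝ) + 1) = (m:ℝ)^2 + ((m:ℝ)^2 + 2*(m:ℝ)) := by ring
    linarith [sq_nonneg ((m:ℝ)), h4, hcast, hexp]
  set S : Finset (Fin n) := Finset.univ.filter fun i => (i, j₀) ∈ Ω with hS
  have hScompl : m ≤ Sᶜ.card := by
    rw [Finset.card_compl, Fintype.card_fin]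
    omega
  obtain ⟨T, hTsub, hTcard⟩ := Finset.exists_subset_card_eq hScompl
  have hD : m - 1 ≤ (Finset.univ.erase j₀).card := by
    rw [Finset.card_erase_of_mem (Finset.mem_univ _), Finset.card_univ, Fintype.card_fin]
    omega
  obtain ⟨D, hDsub, hDcard⟩ := Finset.exists_subset_card_eq hD
  set C : Finset (Fin n) := insert j₀ D with hC
  have hj₀D : j₀ ∉ D := fun h => (Finset.mem_erase.mp (hDsub h)).1 rfl
  have hj₀C : j₀ ∈ C := Finset.mem_insert_self _ _
  have hCcard : C.card = m := by
    rw [hC, Finset.card_insert_of_notMem hj₀D, hDcard]; omega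
  have hTc : Tᶜ.card = m := by
    rw [Finset.card_compl, hTcard, Fintype.card_fin]; omega
  have hCc : Cᶜ.card = m := by
    rw [Finset.card_compl, hCcard, Fintype.card_fin]; omega
  -- the scalar α with α² = 2/n
  have hnpos : (0:ℝ) < n := by exact_mod_cast (by omega : 0 < n)
  set α : ℝ := Real.sqrt (2 / n) with hαdef
  have hα : α * α = 2 / n := Real.mul_self_sqrt (by positivity)
  have hαpos : 0 < α := Real.sqrt_pos.mpr (by positivity)
  have hmne : (m:ℝ) ≠ 0 := by
    have : (0:ℝ) < m := by exact_mod_cast (by omega : 0 < m)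
    exact this.ne'
  have hmcast : (m:ℝ) * (α * α) = 1 := by
    rw [hα, hm]
    push_cast
    field_simp
  -- the vectors
  set aa : Fin n → ℝ := fun i => if i ∈ T then 0 else α with haa
  set uu : Fin n → ℝ := fun i => if i ∈ T then α else 0 with huu
  set bb : Fin n → ℝ := fun j => if j ∈ C then 0 else α with hbb
  set c1 : Fin n → ℝ := fun j => if j ∈ C then α else 0 with hc1
  set c2 : Fin n → ℝ := fun j => if j = j₀ then -α else c1 j with hc2
  -- the factor matrices
  set U : Matrix (Fin n) (Fin 2) ℝ := Matrix.of fun i k => if k = 0 then aa i else uu i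
    with hUdef
  set V1 : Matrix (Fin n) (Fin 2) ℝ := Matrix.of fun j k => if k = 0 then bb j else c1 j
    with hV1def
  set V2 : Matrix (Fin n) (Fin 2) ℝ := Matrix.of fun j k => if k = 0 then bb j else c2 j
    with hV2def
  -- the key sums
  have s_aa : ∑ i, aa i * aa i = 1 := by
    simp only [haa]
    rw [aux_sum_ite, hTcard, hTc]
    linear_combination hmcast
  have s_uu : ∑ i, uu i * uu i = 1 := by
    simp only [huu]
    rw [aux_sum_ite, hTcard, hTc]
    linear_combination hmcast
  have s_au : ∑ i, aa i * uu i = 0 := by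
    simp only [haa, huu]
    rw [aux_sum_ite]
    ring
  have s_ua : ∑ i, uu i * aa i = 0 := by
    simp only [haa, huu]
    rw [aux_sum_ite]
    ring
  have s_bb : ∑ j, bb j * bb j = 1 := by
    simp only [hbb]
    rw [aux_sum_ite, hCcard, hCc]
    linear_combination hmcast
  have s_c1 : ∑ j, c1 j * c1 j = 1 := by
    simp only [hc1]
    rw [aux_sum_ite, hCcard, hCc]
    linear_combination hmcast
  have s_c2 : ∑ j, c2 j * c2 j = 1 := by
    have : ∀ j ∈ Finset.univ, c2 j * c2 j = c1 j * c1 j := by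
      intro j _
      by_cases hj : j = j₀
      · subst hj
        simp only [hc2, hc1, if_pos rfl, if_pos hj₀C]
        ring
      · simp only [hc2, if_neg hj]
    rw [Finset.sum_congr rfl this]
    exact s_c1
  have s_bc1 : ∑ j, bb j * c1 j = 0 := by
    simp only [hbb, hc1]
    rw [aux_sum_ite]
    ring
  have s_c1b : ∑ j, c1 j * bb j = 0 := by
    simp only [hbb, hc1]
    rw [aux_sum_ite]
    ring
  have s_bc2 : ∑ j, bb j * c2 j = 0 := by
    apply Finset.sum_eq_zero
    intro j _
    by_cases hjC : j ∈ C
    · simp only [hbb, if_pos hjC, zero_mul]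
    · have hj : j ≠ j₀ := fun h => hjC (h ▸ hj₀C)
      simp only [hc2, hc1, if_neg hj, if_neg hjC, mul_zero]
  have s_c2b : ∑ j, c2 j * bb j = 0 := by
    apply Finset.sum_eq_zero
    intro j _
    by_cases hjC : j ∈ C
    · simp only [hbb, if_pos hjC, mul_zero]
    · have hj : j ≠ j₀ := fun h => hjC (h ▸ hj₀C)
      simp only [hc2, hc1, if_neg hj, if_neg hjC, zero_mul]
  -- entrywise descriptions of the factor matrices
  have fin2 : ∀ k : Fin 2, k = 0 ∨ k = 1 := by decide
  have hU0 : ∀ i, U i 0 = aa i := fun i => rfl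
  have hU1 : ∀ i, U i 1 = uu i := fun i => rfl
  have hV10 : ∀ j, V1 j 0 = bb j := fun j => rfl
  have hV11 : ∀ j, V1 j 1 = c1 j := fun j => rfl
  have hV20 : ∀ j, V2 j 0 = bb j := fun j => rfl
  have hV21 : ∀ j, V2 j 1 = c2 j := fun j => rfl
  -- orthonormality
  have hUU : Uᵀ * U = 1 := by
    ext k l
    rw [Matrix.mul_apply]
    simp only [Matrix.transpose_apply]
    rcases fin2 k with rfl | rfl <;> rcases fin2 l with rfl | rfl
    · simp only [hU0]; rw [Matrix.one_apply_eq]; exact s_aa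
    · simp only [hU0, hU1]; rw [Matrix.one_apply_ne (by decide)]; exact s_au
    · simp only [hU0, hU1]; rw [Matrix.one_apply_ne (by decide)]; exact s_ua
    · simp only [hU1]; rw [Matrix.one_apply_eq]; exact s_uu
  have hV1V1 : V1ᵀ * V1 = 1 := by
    ext k l
    rw [Matrix.mul_apply]
    simp only [Matrix.transpose_apply]
    rcases fin2 k with rfl | rfl <;> rcases fin2 l with rfl | rfl
    · simp only [hV10]; rw [Matrix.one_apply_eq]; exact s_bb
    · simp only [hV10, hV11]; rw [Matrix.one_apply_ne (by decide)]; exact s_bc1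
    · simp only [hV10, hV11]; rw [Matrix.one_apply_ne (by decide)]; exact s_c1b
    · simp only [hV11]; rw [Matrix.one_apply_eq]; exact s_c1
  have hV2V2 : V2ᵀ * V2 = 1 := by
    ext k l
    rw [Matrix.mul_apply]
    simp only [Matrix.transpose_apply]
    rcases fin2 k with rfl | rfl <;> rcases fin2 l with rfl | rfl
    · simp only [hV20]; rw [Matrix.one_apply_eq]; exact s_bb
    · simp only [hV20, hV21]; rw [Matrix.one_apply_ne (by decide)]; exact s_bc2
    · simp only [hV20, hV21]; rw [Matrix.one_apply_ne (by decide)]; exact s_c2b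
    · simp only [hV21]; rw [Matrix.one_apply_eq]; exact s_c2
  -- entry formulas
  have hM1 : ∀ i j, (U * V1ᵀ) i j = aa i * bb j + uu i * c1 j := by
    intro i j
    rw [Matrix.mul_apply, Fin.sum_univ_two]
    simp only [Matrix.transpose_apply, hU0, hU1, hV10, hV11]
  have hM2 : ∀ i j, (U * V2ᵀ) i j = aa i * bb j + uu i * c2 j := by
    intro i j
    rw [Matrix.mul_apply, Fin.sum_univ_two]
    simp only [Matrix.transpose_apply, hU0, hU1, hV20, hV21]
  -- incoherence of rows
  have h23 : (2:ℝ) / n ≤ 3 / n := div_le_div_of_nonneg_right (by norm_num) hnpos.le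
  have hα3 : α ^ 2 = 2 / n := by rw [pow_two, hα]
  have k1 : α ^ 2 + (0:ℝ) ^ 2 ≤ 3 / n := by linarith [h23, hα3]
  have k2 : (0:ℝ) ^ 2 + α ^ 2 ≤ 3 / n := by linarith [h23, hα3]
  have k3 : (0:ℝ) ^ 2 + (-α) ^ 2 ≤ 3 / n := by
    have : (-α) ^ 2 = α ^ 2 := by ring
    linarith [h23, hα3, this]
  have hrowU : ∀ i : Fin n, (∑ k, U i k ^ 2) ≤ 3 / (n:ℝ) := by
    intro i
    rw [Fin.sum_univ_two, hU0, hU1]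
    by_cases hi : i ∈ T
    · have e1 : aa i = 0 := by simp [haa, hi]
      have e2 : uu i = α := by simp [huu, hi]
      rw [e1, e2]; exact k2
    · have e1 : aa i = α := by simp [haa, hi]
      have e2 : uu i = 0 := by simp [huu, hi]
      rw [e1, e2]; exact k1
  have hrowV1 : ∀ j : Fin n, (∑ k, V1 j k ^ 2) ≤ 3 / (n:ℝ) := by
    intro j
    rw [Fin.sum_univ_two, hV10, hV11]
    by_cases hj : j ∈ C
    · have e1 : bb j = 0 := by simp [hbb, hj]
      have e2 : c1 j = α := by simp [hc1, hj]
      rw [e1, e2]; exact k2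
    · have e1 : bb j = α := by simp [hbb, hj]
      have e2 : c1 j = 0 := by simp [hc1, hj]
      rw [e1, e2]; exact k1
  have hrowV2 : ∀ j : Fin n, (∑ k, V2 j k ^ 2) ≤ 3 / (n:ℝ) := by
    intro j
    rw [Fin.sum_univ_two, hV20, hV21]
    by_cases hjj : j = j₀
    · have hjC : j ∈ C := hjj ▸ hj₀C
      have e1 : bb j = 0 := by simp [hbb, hjC]
      have e2 : c2 j = -α := by simp [hc2, hjj]
      rw [e1, e2]; exact k3
    · have e3 : c2 j = c1 j := by simp [hc2, hjj]
      rw [e3]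
      by_cases hj : j ∈ C
      · have e1 : bb j = 0 := by simp [hbb, hj]
        have e2 : c1 j = α := by simp [hc1, hj]
        rw [e1, e2]; exact k2
      · have e1 : bb j = α := by simp [hbb, hj]
        have e2 : c1 j = 0 := by simp [hc1, hj]
        rw [e1, e2]; exact k1
  -- decomposition as SVD with singular values 1
  have hdiag : ∀ (W : Matrix (Fin n) (Fin 2) ℝ),
      U * Wᵀ = U * Matrix.diagonal (fun _ : Fin 2 => (1:ℝ)) * Wᵀ := by
    intro W
    rw [Matrix.diagonal_one, Matrix.mul_one]
  refine ⟨U * V1ᵀ, U * V2ᵀ, ?_, ?_, ?_, ?_⟩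
  · -- M₁ ≠ M₂
    have hTne : T.Nonempty := Finset.card_pos.mp (by rw [hTcard]; omega)
    obtain ⟨i₀, hi₀⟩ := hTne
    intro hcontra
    have h := congrFun (congrFun hcontra i₀) j₀
    rw [hM1, hM2] at h
    have ha0 : aa i₀ = 0 := by simp only [haa, if_pos hi₀]
    have hu : uu i₀ = α := by simp only [huu, if_pos hi₀]
    have hcc1 : c1 j₀ = α := by simp only [hc1, if_pos hj₀C]
    have hcc2 : c2 j₀ = -α := by simp only [hc2, if_pos rfl]
    rw [ha0, hu, hcc1, hcc2] at h
    have h2 : 2 * (α * α) = 0 := by linear_combination h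
    nlinarith [mul_pos hαpos hαpos, h2]
  · exact ⟨aux_rank U V1 hUU hV1V1, U, V1, fun _ => 1, hUU, hV1V1, fun _ => one_pos,
      hdiag V1, hrowU, hrowV1⟩
  · exact ⟨aux_rank U V2 hUU hV2V2, U, V2, fun _ => 1, hUU, hV2V2, fun _ => one_pos,
      hdiag V2, hrowU, hrowV2⟩
  · -- agreement on Ω
    ext i j
    simp only [sampl, Matrix.of_apply]
    split_ifs with h
    · rw [hM1, hM2]
      by_cases hj : j = j₀
      · subst hj
        have hiS : i ∈ S := by rw [hS]; simp [h]
        have hiT : i ∉ T := fun hT => (Finset.mem_compl.mp (hTsub hT)) hiS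
        have hu0 : uu i = 0 := by simp only [huu, if_neg hiT]
        rw [hu0]
        ring
      · have : c2 j = c1 j := by simp only [hc2, if_neg hj]
        rw [this]
    · rfl
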